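/- arXiv:2012.13545 — 3 statements merged into one kernel-verified Lean document; each statement's English description precedes it below -/
import Mathlib

section
/- Let n, p, K be positive integers, let X be a real n×p matrix with columns x_1,…,x_p, and let a, b ∈ ℝⁿ. Let j'_1,…,j'_K be distinct indices in {1,…,p}, set M'_0 = ∅ and M'_k = {j'_1,…,j'_k} for k ∈ {1,…,K}, and assume the submatrix X_{M'_{k−1}} has linearly independent columns for every k (with P⊥_{M'_0} = I_n). Let S'_1,…,S'_K ∈ {−1,+1}. For each triple (k, j, u) with k ∈ {1,…,K}, j ∈ {1,…,p}\M'_{k−1} and u ∈ {−1,+1}, define e_{(k,j,u)} = (u·x_j − S'_k·x_{j'_k})ᵀ P⊥_{M'_{k−1}} a and d_{(k,j,u)} = (S'_k·x_{j'_k} − u·x_j)ᵀ P⊥_{M'_{k−1}} b. Assume that the set of triples with d_{(k,j,u)} > 0 and the set of triples with d_{(k,j,u)} < 0 are both nonempty, and that e_{(k,j,u)} ≤ 0 for every triple with d_{(k,j,u)} = 0. Then the set {z ∈ ℝ : for every k ∈ {1,…,K} and every j ∈ {1,…,p}\M'_{k−1}, S'_k · x_{j'_k}ᵀ P⊥_{M'_{k−1}}(a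 + b·z) ≥ |x_jᵀ P⊥_{M'_{k−1}}(a + b·z)|} equals the closed interval [L, U], where L is the maximum of e_{(k,j,u)}/d_{(k,j,u)} over triples with d_{(k,j,u)} > 0 and U is the minimum of e_{(k,j,u)}/d_{(k,j,u)} over triples with d_{(k,j,u)} < 0. -/
open Matrix Finset

/-- The set `M'_k = {j'_1, …, j'_k}` of features selected in the first `k` steps
(so `histSet j' 0 = ∅`). -/
def histSet {p K : ℕ} (j' : Fin K → Fin p) (k : ℕ) : Finset (Fin p) :=
  (Finset.univ.filter fun i : Fin K => (i : ℕ) < k).image j'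

/-- The `j`-th column of `X` as a vector. -/
def col {n p : ℕ} (X : Matrix (Fin n) (Fin p) ℝ) (j : Fin p) : Fin n → ℝ :=
  fun i => X i j

/-- The projection matrix `P_M = X_M (X_Mᵀ X_M)⁻¹ X_Mᵀ` onto the span of the columns of `X`
indexed by `M` (for `M = ∅` this is the zero matrix). -/
noncomputable def projF {n p : ℕ} (X : Matrix (Fin n) (Fin p) ℝ) (s : Finset (Fin p)) :
    Matrix (Fin n) (Fin n) ℝ :=
  let Xs : Matrix (Fin n) {j // j ∈ s} ℝ := Matrix.of fun i j => X i (j : Fin p)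
  Xs * (Xsᵀ * Xs)⁻¹ * Xsᵀ

/-- The residual projection `P⊥_M = I − P_M` (so `P⊥_∅ = I`). -/
noncomputable def residF {n p : ℕ} (X : Matrix (Fin n) (Fin p) ℝ) (s : Finset (Fin p)) :
    Matrix (Fin n) (Fin n) ℝ :=
  1 - projF X s

/-- Encoding of a sign `u ∈ {−1, +1}` by a Boolean. -/
def sgnB (u : Bool) : ℝ := if u then 1 else -1

/-- The triples `(k, j, u)` with `k ∈ {1,…,K}`, `j ∈ {1,…,p} \ M'_{k−1}` and `u ∈ {−1,+1}`
(here `t.1 : Fin K` is the zero-based step, so `M'_{k−1} = histSet j' t.1`). -/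
def validTriples {p K : ℕ} (j' : Fin K → Fin p) : Finset (Fin K × Fin p × Bool) :=
  Finset.univ.filter fun t => t.2.1 ∉ histSet j' (t.1 : ℕ)

/-- `e_{(k,j,u)} = (u·x_j − S'_k·x_{j'_k})ᵀ P⊥_{M'_{k−1}} a`. -/
noncomputable def eVal {n p K : ℕ} (X : Matrix (Fin n) (Fin p) ℝ) (a : Fin n → ℝ)
    (j' : Fin K → Fin p) (S : Fin K → ℝ) (t : Fin K × Fin p × Bool) : ℝ :=
  (sgnB t.2.2 • _root_.col X t.2.1 - S t.1 • _root_.col X (j' t.1)) ⬝ᵥ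
    (residF X (histSet j' (t.1 : ℕ)) *ᵥ a)

/-- `d_{(k,j,u)} = (S'_k·x_{j'_k} − u·x_j)ᵀ P⊥_{M'_{k−1}} b`. -/
noncomputable def dVal {n p K : ℕ} (X : Matrix (Fin n) (Fin p) ℝ) (b : Fin n → ℝ)
    (j' : Fin K → Fin p) (S : Fin K → ℝ) (t : Fin K × Fin p × Bool) : ℝ :=
  (S t.1 • _root_.col X (j' t.1) - sgnB t.2.2 • _root_.col X t.2.1) ⬝ᵥ
    (residF X (histSet j' (t.1 : ℕ)) *ᵥ b)

/-- Lemma 1 of the paper: the over-conditioned truncation region of conditional selective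
inference for stepwise feature selection — the set of `z ∈ ℝ` such that at every step `k`
the signed selected feature dominates all remaining candidate features in absolute
correlation with the residual of `a + z b` — is the closed interval `[L, U]`, where `L` is
the maximum of `e/d` over triples with `d > 0` and `U` is the minimum of `e/d` over triples
with `d < 0`. -/
theorem sfs_over_conditioned_region_eq_Icc
    {n p K : ℕ} (hn : 0 < n) (hp : 0 < p) (hK : 0 < K)
    (X : Matrix (Fin n) (Fin p) ℝ) (a b : Fin n → ℝ)
    (j' : Fin K → Fin p) (hinj : Function.Injective j')
    (hLI : ∀ k : Fin K, LinearIndependent ℝ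
      (fun j : {x // x ∈ histSet j' (k : ℕ)} => fun i : Fin n => X i (j : Fin p)))
    (S : Fin K → ℝ) (hS : ∀ k, S k = 1 ∨ S k = -1)
    (hpos : ((validTriples j').filter fun t => 0 < dVal X b j' S t).Nonempty)
    (hneg : ((validTriples j').filter fun t => dVal X b j' S t < 0).Nonempty)
    (hzero : ∀ t ∈ validTriples j', dVal X b j' S t = 0 → eVal X a j' S t ≤ 0) :
    {z : ℝ | ∀ k : Fin K, ∀ j : Fin p, j ∉ histSet j' (k : ℕ) →
        S k * (_root_.col X (j' k) ⬝ᵥ (residF X (histSet j' (k : ℕ)) *ᵥ (a + z • b)))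
          ≥ |_root_.col X j ⬝ᵥ (residF X (histSet j' (k : ℕ)) *ᵥ (a + z • b))|}
      = Set.Icc
          ((((validTriples j').filter fun t => 0 < dVal X b j' S t).image
              fun t => eVal X a j' S t / dVal X b j' S t).max' (hpos.image _))
          ((((validTriples j').filter fun t => dVal X b j' S t < 0).image
              fun t => eVal X a j' S t / dVal X b j' S t).min' (hneg.image _)) := by
  have dot_add_smul : ∀ (v : Fin n → ℝ) (M : Matrix (Fin n) (Fin n) ℝ) (z : ℝ),
      v ⬝ᵥ (M *ᵥ (a + z • b)) = v ⬝ᵥ (M *ᵥ a) + z * (v ⬝ᵥ (M *ᵥ b)) := by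
    intro v M z
    rw [Matrix.mulVec_add, Matrix.mulVec_smul, dotProduct_add, dotProduct_smul, smul_eq_mul]
  ext z
  have key : (∀ k : Fin K, ∀ j : Fin p, j ∉ histSet j' (k : ℕ) →
      S k * (_root_.col X (j' k) ⬝ᵥ (residF X (histSet j' (k : ℕ)) *ᵥ (a + z • b)))
        ≥ |_root_.col X j ⬝ᵥ (residF X (histSet j' (k : ℕ)) *ᵥ (a + z • b))|)
      ↔ ∀ t ∈ validTriples j', eVal X a j' S t ≤ z * dVal X b j' S t := by
    constructor
    · rintro h ⟨k, j, u⟩ ht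
      have hj : j ∉ histSet j' (k : ℕ) := (Finset.mem_filter.mp ht).2
      have h1 := h k j hj
      rw [ge_iff_le, abs_le] at h1
      obtain ⟨h1, h2⟩ := h1
      rw [dot_add_smul, dot_add_smul] at h1 h2
      simp only [eVal, dVal, sub_dotProduct, smul_dotProduct, smul_eq_mul]
      cases u <;> norm_num [sgnB] <;> nlinarith
    · intro h k j hj
      have ht : ∀ u : Bool, (k, j, u) ∈ validTriples j' := fun u =>
        Finset.mem_filter.mpr ⟨Finset.mem_univ _, hj⟩
      have h1 := h (k, j, true) (ht true)
      have h2 := h (k, j, false) (ht false)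
      simp only [eVal, dVal, sub_dotProduct, smul_dotProduct, smul_eq_mul, sgnB] at h1 h2
      norm_num at h1 h2
      rw [ge_iff_le, abs_le, dot_add_smul, dot_add_smul]
      constructor <;> nlinarith
  simp only [Set.mem_setOf_eq, Set.mem_Icc, key]
  constructor
  · intro hz
    refine ⟨Finset.max'_le _ _ _ ?_, Finset.le_min' _ _ _ ?_⟩
    · intro r hr
      obtain ⟨t, ht, rfl⟩ := Finset.mem_image.mp hr
      obtain ⟨ht1, hd⟩ := Finset.mem_filter.mp ht
      rw [div_le_iff₀ hd]
      linarith [hz t ht1]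
    · intro r hr
      obtain ⟨t, ht, rfl⟩ := Finset.mem_image.mp hr
      obtain ⟨ht1, hd⟩ := Finset.mem_filter.mp ht
      rw [le_div_iff_of_neg hd]
      linarith [hz t ht1]
  · rintro ⟨hL, hU⟩ t ht
    rcases lt_trichotomy (dVal X b j' S t) 0 with hd | hd | hd
    · have hz : z ≤ eVal X a j' S t / dVal X b j' S t :=
        le_trans hU (Finset.min'_le _ _
          (Finset.mem_image.mpr ⟨t, Finset.mem_filter.mpr ⟨ht, hd⟩, rfl⟩))
      rw [le_div_iff_of_neg hd] at hz
      linarith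
    · rw [hd, mul_zero]; exact hzero t ht hd
    · have hmem : eVal X a j' S t / dVal X b j' S t ∈
          (((validTriples j').filter fun t => 0 < dVal X b j' S t).image
            fun t => eVal X a j' S t / dVal X b j' S t) :=
        Finset.mem_image_of_mem _ (Finset.mem_filter.mpr ⟨ht, hd⟩)
      have hz : eVal X a j' S t / dVal X b j' S t ≤ z :=
        le_trans (Finset.le_max' _ _ hmem) hL
      rw [div_le_iff₀ hd] at hz
      linarith
end

section
/- Let m ∈ ℝ and v > 0, let μ = gaussianReal m v be the Gaussian measure on ℝ with mean m and variance v, and let 𝒵 ⊆ ℝ be a measurable set with μ(𝒵) > 0. Define the truncated cumulative distribution function F : ℝ → ℝ by F(t) = μ(𝒵 ∩ (−∞, t]) / μ(𝒵). Then the pushforward under F of the conditional measure μ(· | 𝒵) (i.e., the measure B ↦ μ(B ∩ 𝒵)/μ(𝒵)) is the uniform probability measure on the interval [0, 1]. -/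
open MeasureTheory ProbabilityTheory Set Filter
open scoped NNReal ENNReal Topology

/-- Probability integral transform: if a real probability measure has continuous cdf, then the
pushforward of the measure under its cdf is uniform on `[0,1]`. -/
lemma pit_of_continuous_cdf (ν : Measure ℝ) [IsProbabilityMeasure ν]
    (hcont : Continuous (cdf ν)) :
    Measure.map (cdf ν) ν = volume.restrict (Set.Icc (0 : ℝ) 1) := by
  haveI : IsFiniteMeasure (volume.restrict (Set.Icc (0 : ℝ) 1)) :=
    ⟨by rw [Measure.restrict_apply_univ]; simp⟩
  haveI : IsFiniteMeasure (Measure.map (cdf ν) ν) :=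
    Measure.isFiniteMeasure_map _ _
  refine Measure.ext_of_Iic _ _ (fun x => ?_)
  rw [Measure.map_apply hcont.measurable measurableSet_Iic,
    Measure.restrict_apply measurableSet_Iic]
  rcases lt_or_ge x 0 with hx0 | hx0
  · have h1 : (cdf ν) ⁻¹' Iic x = ∅ := by
      ext t
      simp only [mem_preimage, mem_Iic, mem_empty_iff_false, iff_false, not_le]
      exact hx0.trans_le (cdf_nonneg ν t)
    have h2 : Iic x ∩ Icc (0 : ℝ) 1 = ∅ := by
      ext t
      simp only [mem_inter_iff, mem_Iic, mem_Icc, mem_empty_iff_false, iff_false]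
      rintro ⟨ht, h0, -⟩
      linarith
    rw [h1, h2]; simp
  rcases le_or_gt 1 x with hx1 | hx1
  · have h1 : (cdf ν) ⁻¹' Iic x = univ := by
      ext t
      simp only [mem_preimage, mem_Iic, mem_univ, iff_true]
      exact (cdf_le_one ν t).trans hx1
    have h2 : Iic x ∩ Icc (0 : ℝ) 1 = Icc (0 : ℝ) 1 := by
      rw [inter_eq_self_of_subset_right]
      intro t ht
      exact ht.2.trans hx1
    rw [h1, h2, measure_univ]
    simp
  -- main case : 0 ≤ x < 1
  have h2 : Iic x ∩ Icc (0 : ℝ) 1 = Icc 0 x := by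
    ext t
    simp only [mem_inter_iff, mem_Iic, mem_Icc]
    constructor
    · rintro ⟨ht, h0, -⟩; exact ⟨h0, ht⟩
    · rintro ⟨h0, ht⟩; exact ⟨ht, h0, ht.trans hx1.le⟩
  rw [h2, Real.volume_Icc, sub_zero]
  set S : Set ℝ := (cdf ν) ⁻¹' Iic x with hS
  -- S is bounded above
  obtain ⟨t₀, ht₀⟩ : ∃ t₀ : ℝ, x < cdf ν t₀ :=
    ((tendsto_cdf_atTop ν).eventually_const_lt hx1).exists
  have hbdd : BddAbove S := by
    refine ⟨t₀, fun s hs => ?_⟩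
    by_contra hst
    push_neg at hst
    exact absurd ((monotone_cdf ν hst.le).trans hs) (not_le.2 ht₀)
  rcases eq_empty_or_nonempty S with hSe | hSne
  · -- S empty : then x = 0
    have hx0' : x ≤ 0 := by
      by_contra hx
      push_neg at hx
      obtain ⟨t, ht⟩ := ((tendsto_cdf_atBot ν).eventually_lt_const hx).exists
      exact absurd (hSe ▸ (ht.le : t ∈ S)) (notMem_empty t)
    have : x = 0 := le_antisymm hx0' hx0
    rw [hSe, this]; simp
  · have hSclosed : IsClosed S := isClosed_Iic.preimage hcont
    set s₀ : ℝ := sSup S with hs₀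
    have hs₀mem : s₀ ∈ S := hSclosed.csSup_mem hSne hbdd
    have hSIic : S = Iic s₀ := by
      ext t
      constructor
      · exact fun ht => le_csSup hbdd ht
      · intro ht
        exact le_trans (monotone_cdf ν ht) hs₀mem
    have hlt : cdf ν s₀ = x := by
      refine le_antisymm hs₀mem ?_
      by_contra h
      push_neg at h
      have hev : ∀ᶠ t in 𝓝 s₀, cdf ν t < x :=
        (hcont.continuousAt).eventually_lt_const h
      have hev' : ∀ᶠ t in 𝓝[>] s₀, cdf ν t < x := nhdsWithin_le_nhds hev
      obtain ⟨t, htlt, hts⟩ := (hev'.and self_mem_nhdsWithin).exists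
      have : t ∈ S := htlt.le
      exact absurd (le_csSup hbdd this) (not_le.2 hts)
    rw [hSIic, ← hlt, ofReal_cdf]

/-- Probability-integral-transform property of the truncated-Gaussian pivotal quantity
(equation (5) of the paper): if `μ = N(m, v)` with `v > 0`, `𝒵` is measurable with
`μ(𝒵) > 0`, and `F(t) = μ(𝒵 ∩ (−∞, t]) / μ(𝒵)`, then the pushforward of the conditional
measure `μ(·|𝒵)` under `F` is the uniform probability measure on `[0, 1]`. -/
theorem truncated_gaussian_cdf_pushforward_uniform
    (m : ℝ) (v : ℝ≥0) (hv : 0 < v)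
    (Z : Set ℝ) (hZmeas : MeasurableSet Z) (hZpos : 0 < gaussianReal m v Z) :
    Measure.map
        (fun t : ℝ =>
          ((gaussianReal m v) (Z ∩ Set.Iic t)).toReal / ((gaussianReal m v) Z).toReal)
        ((gaussianReal m v)[|Z])
      = volume.restrict (Set.Icc (0 : ℝ) 1) := by
  set μ := gaussianReal m v with hμ
  set ν := μ[|Z] with hν
  haveI : IsProbabilityMeasure ν := cond_isProbabilityMeasure hZpos.ne'
  -- singletons are ν-null
  have hatom : ∀ t : ℝ, ν {t} = 0 := by
    intro t
    have hμt : μ {t} = 0 :=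
      gaussianReal_absolutelyContinuous m hv.ne' (measure_singleton t)
    rw [hν, cond_apply hZmeas]
    have : μ (Z ∩ {t}) = 0 :=
      le_antisymm ((measure_mono Set.inter_subset_right).trans hμt.le) (zero_le)
    rw [this, mul_zero]
  -- cdf ν is continuous
  have hcont : Continuous (cdf ν) := by
    rw [continuous_iff_continuousAt]
    intro t
    have hmono := monotone_cdf ν
    rw [hmono.continuousAt_iff_leftLim_eq_rightLim]
    have hright : Function.rightLim (cdf ν) t = cdf ν t := by
      refine (hmono.continuousWithinAt_Ioi_iff_rightLim_eq).1 ?_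
      exact ((cdf ν).right_continuous t).mono Set.Ioi_subset_Ici_self
    have hleft : Function.leftLim (cdf ν) t = cdf ν t := by
      have hsing : (cdf ν).measure {t} = 0 := by
        rw [measure_cdf]; exact hatom t
      rw [StieltjesFunction.measure_singleton] at hsing
      have h1 : cdf ν t - Function.leftLim (cdf ν) t ≤ 0 := by
        by_contra h
        push_neg at h
        rw [ENNReal.ofReal_eq_zero] at hsing; linarith
      exact le_antisymm (hmono.leftLim_le le_rfl) (by linarith)
    rw [hleft, hright]
  -- the function in the statement is the cdf of ν
  have hfun : (fun t : ℝ => (μ (Z ∩ Set.Iic t)).toReal / (μ Z).toReal)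
      = (cdf ν : ℝ → ℝ) := by
    funext t
    rw [cdf_eq_real, measureReal_def, hν, cond_apply hZmeas, ENNReal.toReal_mul, ENNReal.toReal_inv,
      inv_mul_eq_div]
  rw [hfun]
  exact pit_of_continuous_cdf ν hcont
end

section
/- Let v > 0, let μ = gaussianReal 0 v be the centered Gaussian measure on ℝ with variance v, and let 𝒵 ⊆ ℝ be a measurable set with μ(𝒵) > 0. Define F(t) = μ(𝒵 ∩ (−∞, t]) / μ(𝒵) and the selective p-value function p(z) = 2 · min(F(z), 1 − F(z)). Then for every α ∈ [0, 1], the conditional measure μ(· | 𝒵) of the set {z ∈ ℝ : p(z) ≤ α} equals α. -/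
open MeasureTheory ProbabilityTheory
open scoped NNReal ENNReal

section Aux
open Set Filter Topology

lemma cdf_continuous (ν : Measure ℝ) [IsProbabilityMeasure ν] [NullSingletonClass ν] :
    Continuous (cdf ν) := by
  rw [continuous_iff_continuousAt]
  intro x
  rw [(monotone_cdf ν).continuousAt_iff_leftLim_eq_rightLim, StieltjesFunction.rightLim_eq]
  have h1 : (cdf ν).measure {x} = 0 := by rw [measure_cdf]; exact measure_singleton x
  rw [StieltjesFunction.measure_singleton] at h1
  have h2 := Monotone.leftLim_le (monotone_cdf ν) (le_refl x)
  have := ENNReal.ofReal_eq_zero.mp h1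
  linarith

lemma aux_le (ν : Measure ℝ) [IsProbabilityMeasure ν] [NullSingletonClass ν] {c : ℝ}
    (hc0 : 0 ≤ c) (hc1 : c < 1) : ν {z | cdf ν z ≤ c} = ENNReal.ofReal c := by
  set F := cdf ν with hF
  have hcont : Continuous (F : ℝ → ℝ) := cdf_continuous ν
  have hmono : Monotone (F : ℝ → ℝ) := monotone_cdf ν
  set A : Set ℝ := {z | F z ≤ c} with hA
  have hclosed : IsClosed A := isClosed_le hcont continuous_const
  -- bounded above
  obtain ⟨z₀, hz₀⟩ : ∃ z₀, c < F z₀ :=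
    ((tendsto_cdf_atTop ν).eventually (eventually_gt_nhds hc1)).exists
  have hbdd : BddAbove A := by
    refine ⟨z₀, fun a ha => ?_⟩
    by_contra h
    push_neg at h
    exact absurd (hmono h.le) (by simp only [hA, mem_setOf_eq] at ha; linarith)
  rcases A.eq_empty_or_nonempty with hAe | hAne
  · -- A empty: c must be 0
    rw [hAe, measure_empty]
    by_contra h
    have hcpos : 0 < c := lt_of_le_of_ne hc0 (by
      intro h0; rw [← h0] at h; simp at h)
    have := tendsto_cdf_atBot ν
    obtain ⟨z, hz⟩ := (this.eventually (eventually_lt_nhds hcpos)).exists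
    exact absurd hAe (Nonempty.ne_empty ⟨z, le_of_lt hz⟩)
  · set s := sSup A with hs
    have hsA : s ∈ A := hclosed.csSup_mem hAne hbdd
    have hAeq : A = Iic s := by
      apply Subset.antisymm (fun a ha => le_csSup hbdd ha)
      intro z hz
      exact le_trans (hmono hz) hsA
    have hFs : F s = c := by
      refine le_antisymm hsA ?_
      -- c ≤ F s via right approach
      have htend : Tendsto (fun n : ℕ => F (s + 1/(n+1))) atTop (𝓝 (F s)) := by
        have : Tendsto (fun n : ℕ => s + 1/((n:ℝ)+1)) atTop (𝓝 s) := by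
          have := tendsto_one_div_add_atTop_nhds_zero_nat (𝕜 := ℝ)
          simpa using tendsto_const_nhds.add this
        exact (hcont.continuousAt).tendsto.comp this
      refine ge_of_tendsto htend (Eventually.of_forall fun n => ?_)
      have hnot : s + 1/((n:ℝ)+1) ∉ A := by
        rw [hAeq]
        simp only [mem_Iic, not_le]
        have : (0:ℝ) < 1/((n:ℝ)+1) := by positivity
        linarith
      simp only [hA, mem_setOf_eq, not_le] at hnot
      exact hnot.le
    rw [hAeq, ← ofReal_cdf ν s, hFs]

lemma aux_ge (ν : Measure ℝ) [IsProbabilityMeasure ν] [NullSingletonClass ν] {c : ℝ}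
    (hc0 : 0 < c) (hc1 : c ≤ 1) : ν {z | c ≤ cdf ν z} = ENNReal.ofReal (1 - c) := by
  set F := cdf ν with hF
  have hcont : Continuous (F : ℝ → ℝ) := cdf_continuous ν
  have hmono : Monotone (F : ℝ → ℝ) := monotone_cdf ν
  set B : Set ℝ := {z | c ≤ F z} with hB
  have hclosed : IsClosed B := isClosed_le continuous_const hcont
  obtain ⟨z₀, hz₀⟩ : ∃ z₀, F z₀ < c := by
    have := tendsto_cdf_atBot ν
    exact (this.eventually (eventually_lt_nhds hc0)).exists
  have hbdd : BddBelow B := by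
    refine ⟨z₀, fun b hb => ?_⟩
    by_contra h
    push_neg at h
    exact absurd (hmono h.le) (by simp only [hB, mem_setOf_eq] at hb; linarith)
  rcases B.eq_empty_or_nonempty with hBe | hBne
  · rw [hBe, measure_empty]
    by_contra h
    have hclt : c < 1 := lt_of_le_of_ne hc1 (by
      intro h1; rw [h1] at h; simp at h)
    have := tendsto_cdf_atTop ν
    obtain ⟨z, hz⟩ := (this.eventually (eventually_gt_nhds hclt)).exists
    exact absurd hBe (Nonempty.ne_empty ⟨z, le_of_lt hz⟩)
  · set s := sInf B with hs
    have hsB : s ∈ B := hclosed.csInf_mem hBne hbdd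
    have hBeq : B = Ici s := by
      apply Subset.antisymm (fun b hb => csInf_le hbdd hb)
      intro z hz
      exact le_trans hsB (hmono hz)
    have hFs : F s = c := by
      refine le_antisymm ?_ hsB
      have htend : Tendsto (fun n : ℕ => F (s - 1/(n+1))) atTop (𝓝 (F s)) := by
        have : Tendsto (fun n : ℕ => s - 1/((n:ℝ)+1)) atTop (𝓝 s) := by
          have := tendsto_one_div_add_atTop_nhds_zero_nat (𝕜 := ℝ)
          simpa using tendsto_const_nhds.sub this
        exact (hcont.continuousAt).tendsto.comp this
      refine le_of_tendsto htend (Eventually.of_forall fun n => ?_)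
      have hnot : s - 1/((n:ℝ)+1) ∉ B := by
        rw [hBeq]
        simp only [mem_Ici, not_le]
        have : (0:ℝ) < 1/((n:ℝ)+1) := by positivity
        linarith
      simp only [hB, mem_setOf_eq, not_le] at hnot
      exact hnot.le
    have hIio : ν (Iio s) = ENNReal.ofReal c := by
      rw [measure_congr Iio_ae_eq_Iic, ← ofReal_cdf ν s, hFs]
    rw [hBeq, ← compl_Iio, prob_compl_eq_one_sub measurableSet_Iio, hIio,
      ENNReal.ofReal_sub _ hc0.le, ENNReal.ofReal_one]

end Aux

section Main
open Set Filter Topology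

/-- Selective type-I error control (equation (6) of the paper): let `μ = N(0, v)` with
`v > 0`, let `𝒵` be measurable with `μ(𝒵) > 0`, let
`F(t) = μ(𝒵 ∩ (−∞, t]) / μ(𝒵)` and `p(z) = 2 · min(F(z), 1 − F(z))`. Then for every
`α ∈ [0, 1]`, the conditional measure `μ(·|𝒵)` of `{z : p(z) ≤ α}` equals `α`. -/
theorem selective_pvalue_type_I_error_control
    (v : ℝ≥0) (hv : 0 < v)
    (Z : Set ℝ) (hZmeas : MeasurableSet Z) (hZpos : 0 < gaussianReal 0 v Z) :
    ∀ α ∈ Set.Icc (0 : ℝ) 1,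
      ((gaussianReal 0 v)[|Z])
          {z : ℝ |
            2 * min
                (((gaussianReal 0 v) (Z ∩ Set.Iic z)).toReal / ((gaussianReal 0 v) Z).toReal)
                (1 - ((gaussianReal 0 v) (Z ∩ Set.Iic z)).toReal /
                    ((gaussianReal 0 v) Z).toReal)
              ≤ α}
        = ENNReal.ofReal α := by
  intro α hα
  obtain ⟨hα0, hα1⟩ := hα
  set μ := gaussianReal 0 v with hμ
  set ν := μ[|Z] with hν
  haveI hprob : IsProbabilityMeasure ν := cond_isProbabilityMeasure hZpos.ne'
  haveI hnoatoms : NullSingletonClass ν := by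
    constructor
    intro x
    rw [hν, cond_apply hZmeas]
    have hx : μ {x} = 0 :=
      (gaussianReal_absolutelyContinuous 0 hv.ne') (measure_singleton x)
    have : μ (Z ∩ {x}) = 0 := measure_mono_null inter_subset_right hx
    rw [this, mul_zero]
  -- the function in the set is the cdf of ν
  have hFeq : ∀ z : ℝ, (μ (Z ∩ Set.Iic z)).toReal / (μ Z).toReal = cdf ν z := by
    intro z
    rw [cdf_eq_real, measureReal_def, hν, cond_apply hZmeas, ENNReal.toReal_mul, ENNReal.toReal_inv,
      inv_mul_eq_div]
  simp only [hFeq]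
  set F : ℝ → ℝ := fun z => cdf ν z with hFdef
  rcases eq_or_lt_of_le hα1 with h1 | hlt
  · -- α = 1 : the set is univ
    subst h1
    have : {z : ℝ | 2 * min (F z) (1 - F z) ≤ 1} = univ := by
      ext z
      simp only [mem_setOf_eq, mem_univ, iff_true]
      rcases le_total (F z) (1 - F z) with h | h
      · rw [min_eq_left h]; linarith
      · rw [min_eq_right h]; linarith
    rw [this, measure_univ, ENNReal.ofReal_one]
  · -- α < 1
    have hsplit : {z : ℝ | 2 * min (F z) (1 - F z) ≤ α}
        = {z : ℝ | F z ≤ α / 2} ∪ {z : ℝ | 1 - α / 2 ≤ F z} := by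
      ext z
      simp only [mem_setOf_eq, mem_union]
      constructor
      · intro h
        rcases le_total (F z) (1 - F z) with hm | hm
        · left; rw [min_eq_left hm] at h; linarith
        · right; rw [min_eq_right hm] at h; linarith
      · intro h
        rcases h with h | h
        · calc 2 * min (F z) (1 - F z) ≤ 2 * F z := by
                have := min_le_left (F z) (1 - F z); linarith
            _ ≤ α := by linarith
        · calc 2 * min (F z) (1 - F z) ≤ 2 * (1 - F z) := by
                have := min_le_right (F z) (1 - F z); linarith
            _ ≤ α := by linarith
    rw [hsplit]
    have hdisj : Disjoint {z : ℝ | F z ≤ α / 2} {z : ℝ | 1 - α / 2 ≤ F z} := by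
      rw [disjoint_left]
      intro z h1 h2
      simp only [mem_setOf_eq] at h1 h2
      linarith
    have hmeasB : MeasurableSet {z : ℝ | 1 - α / 2 ≤ F z} :=
      (isClosed_le continuous_const (cdf_continuous ν)).measurableSet
    rw [measure_union hdisj hmeasB]
    rw [aux_le ν (by linarith) (by linarith), aux_ge ν (by linarith) (by linarith)]
    rw [← ENNReal.ofReal_add (by linarith) (by linarith)]
    ring_nf

end Main
end
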